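/- arXiv:0706.4267 — 4 statements merged into one kernel-verified Lean document; each statement's English description precedes it below -/
import Mathlib

section
/- Let φ be C¹ near x₀ with ∇φ(x₀) ≠ 0, and for each small ε let x₁^ε be a maximum point of φ on the closed ball B̄_ε(x₀). Then (x₁^ε − x₀)/ε → ∇φ(x₀)/|∇φ(x₀)| as ε → 0. -/
open Filter Topology Metric RealInnerProductSpace

/-- If φ is C¹ near x₀ with ∇φ(x₀) ≠ 0 and x₁^ε is a maximum point
of φ on B̄_ε(x₀), then (x₁^ε − x₀)/ε → ∇φ(x₀)/|∇φ(x₀)| as ε → 0⁺. -/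
theorem max_points_direction_of_gradient {n : ℕ}
    (φ : EuclideanSpace ℝ (Fin n) → ℝ) (x₀ : EuclideanSpace ℝ (Fin n))
    (x₁ : ℝ → EuclideanSpace ℝ (Fin n))
    (hφ : ContDiffAt ℝ 1 φ x₀) (hgrad : gradient φ x₀ ≠ 0)
    (hmax : ∀ᶠ ε in 𝓝[>] (0 : ℝ),
      x₁ ε ∈ closedBall x₀ ε ∧ IsMaxOn φ (closedBall x₀ ε) (x₁ ε)) :
    Tendsto (fun ε : ℝ => ε⁻¹ • (x₁ ε - x₀)) (𝓝[>] (0 : ℝ))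
      (𝓝 (‖gradient φ x₀‖⁻¹ • gradient φ x₀)) := by
  set g := gradient φ x₀ with hgdef
  have hG : (0 : ℝ) < ‖g‖ := norm_pos_iff.mpr hgrad
  set v : EuclideanSpace ℝ (Fin n) := ‖g‖⁻¹ • g with hvdef
  have hv : ‖v‖ = 1 := by
    rw [hvdef, norm_smul, norm_inv, norm_norm]
    field_simp
  have hdiff : DifferentiableAt ℝ φ x₀ := hφ.differentiableAt one_ne_zero
  have hGr : HasGradientAt φ g x₀ := hdiff.hasGradientAt
  set e : EuclideanSpace ℝ (Fin n) → ℝ := fun x => φ x - φ x₀ - ⟪g, x - x₀⟫ with hedef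
  have ho : e =o[𝓝 x₀] (fun x => x - x₀) := hasGradientAt_iff_isLittleO.mp hGr
  -- x₁ stays in the ball
  have hx1sub : ∀ᶠ ε in 𝓝[>] (0 : ℝ), dist (x₁ ε) x₀ ≤ ε :=
    hmax.mono fun ε h => mem_closedBall.mp h.1
  have hpos : ∀ᶠ ε in 𝓝[>] (0 : ℝ), (0 : ℝ) < ε := self_mem_nhdsWithin
  have hid0 : Tendsto (fun ε : ℝ => ε) (𝓝[>] (0 : ℝ)) (𝓝 0) :=
    tendsto_id.mono_left nhdsWithin_le_nhds
  have htendx1 : Tendsto x₁ (𝓝[>] (0 : ℝ)) (𝓝 x₀) := by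
    refine tendsto_iff_dist_tendsto_zero.mpr ?_
    exact squeeze_zero' (Eventually.of_forall fun _ => dist_nonneg) hx1sub hid0
  have hO1 : (fun ε => x₁ ε - x₀) =O[𝓝[>] (0 : ℝ)] (fun ε : ℝ => ε) := by
    rw [Asymptotics.isBigO_iff]
    refine ⟨1, ?_⟩
    filter_upwards [hx1sub, hpos] with ε h1 h2
    rw [one_mul, Real.norm_of_nonneg h2.le]
    simpa [dist_eq_norm] using h1
  have hE1 : (fun ε => e (x₁ ε)) =o[𝓝[>] (0 : ℝ)] (fun ε : ℝ => ε) :=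
    (ho.comp_tendsto htendx1).trans_isBigO hO1
  -- comparison point
  set p : ℝ → EuclideanSpace ℝ (Fin n) := fun ε => x₀ + ε • v with hpdef
  have htendp : Tendsto p (𝓝[>] (0 : ℝ)) (𝓝 x₀) := by
    have : Tendsto p (𝓝 (0 : ℝ)) (𝓝 (x₀ + (0 : ℝ) • v)) := by
      apply Tendsto.const_add
      exact (tendsto_id.smul_const v)
    simpa using this.mono_left nhdsWithin_le_nhds
  have hpnorm : ∀ ε : ℝ, ‖p ε - x₀‖ = |ε| := by
    intro ε
    simp [hpdef, norm_smul, hv]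
  have hO2 : (fun ε => p ε - x₀) =O[𝓝[>] (0 : ℝ)] (fun ε : ℝ => ε) := by
    rw [Asymptotics.isBigO_iff]
    exact ⟨1, Eventually.of_forall fun ε => by simp [hpnorm ε, Real.norm_eq_abs]⟩
  have hE2 : (fun ε => e (p ε)) =o[𝓝[>] (0 : ℝ)] (fun ε : ℝ => ε) :=
    (ho.comp_tendsto htendp).trans_isBigO hO2
  -- the error quotient tends to 0
  have hD : Tendsto (fun ε => 2 * ‖g‖⁻¹ * ((e (x₁ ε) - e (p ε)) / ε)) (𝓝[>] (0 : ℝ)) (𝓝 0) := by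
    have h := (hE1.sub hE2).tendsto_div_nhds_zero
    have := h.const_mul (2 * ‖g‖⁻¹)
    simpa using this
  -- key inequality
  have key : ∀ᶠ ε in 𝓝[>] (0 : ℝ),
      ‖ε⁻¹ • (x₁ ε - x₀) - v‖ ^ 2 ≤ 2 * ‖g‖⁻¹ * ((e (x₁ ε) - e (p ε)) / ε) := by
    filter_upwards [hmax, hpos] with ε hm hε
    set y := ε⁻¹ • (x₁ ε - x₀) with hydef
    have hyn : ‖y‖ ≤ 1 := by
      rw [hydef, norm_smul, norm_inv, Real.norm_of_nonneg hε.le]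
      rw [inv_mul_le_iff₀ hε, mul_one]
      simpa [dist_eq_norm] using hm.1
    have hxy : x₁ ε - x₀ = ε • y := by
      rw [hydef, smul_smul, mul_inv_cancel₀ hε.ne', one_smul]
    have hpmem : p ε ∈ closedBall x₀ ε := by
      rw [mem_closedBall, dist_eq_norm]
      simp only [hpdef, add_sub_cancel_left]
      rw [norm_smul, hv, mul_one, Real.norm_of_nonneg hε.le]
    have hφle : φ (p ε) ≤ φ (x₁ ε) := hm.2 hpmem
    have hip : ⟪g, p ε - x₀⟫ = ε * ‖g‖ := by
      simp only [hpdef, add_sub_cancel_left, hvdef]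
      rw [inner_smul_right, inner_smul_right, real_inner_self_eq_norm_sq]
      field_simp
    have hiy : ⟪g, x₁ ε - x₀⟫ = ε * ⟪g, y⟫ := by
      rw [hxy, inner_smul_right]
    -- from maximality: ‖g‖ - ⟪g, y⟫ ≤ (e (x₁ ε) - e (p ε)) / ε
    have hkey : ‖g‖ - ⟪g, y⟫ ≤ (e (x₁ ε) - e (p ε)) / ε := by
      rw [le_div_iff₀ hε]
      have h1 : φ (x₁ ε) = φ x₀ + ⟪g, x₁ ε - x₀⟫ + e (x₁ ε) := by
        simp [hedef]
      have h2 : φ (p ε) = φ x₀ + ⟪g, p ε - x₀⟫ + e (p ε) := by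
        simp [hedef]
      have := hφle
      rw [h1, h2, hip, hiy] at this
      nlinarith
    have hiv : ⟪y, v⟫ = ‖g‖⁻¹ * ⟪g, y⟫ := by
      rw [hvdef, inner_smul_right, real_inner_comm]
    have hexp : ‖y - v‖ ^ 2 = ‖y‖ ^ 2 - 2 * ⟪y, v⟫ + ‖v‖ ^ 2 := norm_sub_sq_real y v
    have hy2 : ‖y‖ ^ 2 ≤ 1 := by nlinarith [norm_nonneg y]
    rw [hexp, hiv, hv]
    have h2 : 2 * ‖g‖⁻¹ * ((e (x₁ ε) - e (p ε)) / ε) ≥ 2 * ‖g‖⁻¹ * (‖g‖ - ⟪g, y⟫) := by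
      apply mul_le_mul_of_nonneg_left hkey
      positivity
    have h3 : 2 * ‖g‖⁻¹ * (‖g‖ - ⟪g, y⟫) = 2 - 2 * (‖g‖⁻¹ * ⟪g, y⟫) := by
      field_simp
    linarith [h2, h3, hy2]
  -- conclude via squeeze
  rw [tendsto_iff_norm_sub_tendsto_zero]
  have hsq : Tendsto (fun ε => Real.sqrt (2 * ‖g‖⁻¹ * ((e (x₁ ε) - e (p ε)) / ε)))
      (𝓝[>] (0 : ℝ)) (𝓝 0) := by
    have := (Real.continuous_sqrt.tendsto 0).comp hD
    simpa only [Function.comp_def, Real.sqrt_zero] using this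
  refine squeeze_zero' (Eventually.of_forall fun _ => norm_nonneg _) ?_ hsq
  filter_upwards [key] with ε hk
  have h0 : ‖ε⁻¹ • (x₁ ε - x₀) - v‖ = Real.sqrt (‖ε⁻¹ • (x₁ ε - x₀) - v‖ ^ 2) := by
    rw [Real.sqrt_sq (norm_nonneg _)]
  rw [h0]
  exact Real.sqrt_le_sqrt hk
end

section
/- Let φ be C¹ near x₀ with ∇φ(x₀) ≠ 0, and for each small ε let x₂^ε be a minimum point of φ on the closed ball B̄_ε(x₀). Then (x₂^ε − x₀)/ε → −∇φ(x₀)/|∇φ(x₀)| as ε → 0. -/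
open Filter Topology Metric

/-- If φ is C¹ near x₀ with ∇φ(x₀) ≠ 0 and x₂^ε is a minimum point
of φ on B̄_ε(x₀), then (x₂^ε − x₀)/ε → −∇φ(x₀)/|∇φ(x₀)| as ε → 0⁺. -/
theorem min_points_direction_of_gradient {n : ℕ}
    (φ : EuclideanSpace ℝ (Fin n) → ℝ) (x₀ : EuclideanSpace ℝ (Fin n))
    (x₂ : ℝ → EuclideanSpace ℝ (Fin n))
    (hφ : ContDiffAt ℝ 1 φ x₀) (hgrad : gradient φ x₀ ≠ 0)
    (hmin : ∀ᶠ ε in 𝓝[>] (0 : ℝ),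
      x₂ ε ∈ closedBall x₀ ε ∧ IsMinOn φ (closedBall x₀ ε) (x₂ ε)) :
    Tendsto (fun ε : ℝ => ε⁻¹ • (x₂ ε - x₀)) (𝓝[>] (0 : ℝ))
      (𝓝 (-(‖gradient φ x₀‖⁻¹ • gradient φ x₀))) := by
  set g := gradient φ x₀ with hgdef
  set v : EuclideanSpace ℝ (Fin n) := ‖g‖⁻¹ • g with hvdef
  have hG : (0:ℝ) < ‖g‖ := norm_pos_iff.mpr hgrad
  have hvnorm : ‖v‖ = 1 := by
    rw [hvdef, norm_smul, norm_inv, norm_norm, inv_mul_cancel₀ hG.ne']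
  have hder : HasGradientAt φ g x₀ :=
    (hφ.differentiableAt one_ne_zero).hasGradientAt
  have hlo : (fun x' => φ x' - φ x₀ - inner ℝ g (x' - x₀)) =o[𝓝 x₀]
      fun x' : EuclideanSpace ℝ (Fin n) => x' - x₀ :=
    hasGradientAt_iff_isLittleO.mp hder
  have hx2tend : Tendsto x₂ (𝓝[>] (0:ℝ)) (𝓝 x₀) := by
    rw [tendsto_iff_dist_tendsto_zero]
    refine squeeze_zero' (Eventually.of_forall fun ε => dist_nonneg)
      (hmin.mono fun ε h => mem_closedBall.mp h.1) ?_
    exact tendsto_id.mono_left nhdsWithin_le_nhds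
  have hytend : Tendsto (fun ε : ℝ => x₀ - ε • v) (𝓝[>] (0:ℝ)) (𝓝 x₀) := by
    have : Tendsto (fun ε : ℝ => x₀ - ε • v) (𝓝 (0:ℝ)) (𝓝 (x₀ - (0:ℝ) • v)) := by
      exact (tendsto_const_nhds.sub (tendsto_id.smul_const v))
    simpa using this.mono_left nhdsWithin_le_nhds
  rw [Metric.tendsto_nhds]
  intro η hη
  set δ : ℝ := ‖g‖ * η ^ 2 / 8 with hδdef
  have hδ : 0 < δ := by positivity
  have hbound := hlo.def hδ
  filter_upwards [hmin, hx2tend.eventually hbound, hytend.eventually hbound,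
    self_mem_nhdsWithin] with ε hm h1 h2 hε
  have hε' : (0:ℝ) < ε := hε
  set y : EuclideanSpace ℝ (Fin n) := x₀ - ε • v with hydef
  have hy0 : y - x₀ = -(ε • v) := by rw [hydef]; abel
  have hyn : ‖y - x₀‖ = ε := by
    rw [hy0, norm_neg, norm_smul, hvnorm, Real.norm_eq_abs, abs_of_pos hε', mul_one]
  have hymem : y ∈ closedBall x₀ ε := by
    rw [mem_closedBall, dist_eq_norm, hyn]
  have hxn : ‖x₂ ε - x₀‖ ≤ ε := by
    rw [← dist_eq_norm]; exact mem_closedBall.mp hm.1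
  -- inner products
  have hinnery : inner ℝ g (y - x₀) = -(ε * ‖g‖) := by
    rw [hy0, inner_neg_right, real_inner_smul_right, hvdef, real_inner_smul_right,
      real_inner_self_eq_norm_sq]
    field_simp
  -- bounds from little-o
  have hb1 : |φ (x₂ ε) - φ x₀ - inner ℝ g (x₂ ε - x₀)| ≤ δ * ε := by
    refine le_trans ?_ (mul_le_mul_of_nonneg_left hxn hδ.le)
    simpa [Real.norm_eq_abs] using h1
  have hb2 : |φ y - φ x₀ - inner ℝ g (y - x₀)| ≤ δ * ε := by
    have := h2
    simp only [Real.norm_eq_abs] at this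
    calc |φ y - φ x₀ - inner ℝ g (y - x₀)| ≤ δ * ‖y - x₀‖ := this
    _ = δ * ε := by rw [hyn]
  have hcmp : φ (x₂ ε) ≤ φ y := hm.2 hymem
  have hkey : inner ℝ g (x₂ ε - x₀) ≤ -(ε * ‖g‖) + 2 * (δ * ε) := by
    have e1 : φ (x₂ ε) - φ x₀ - inner ℝ g (x₂ ε - x₀) ≥ -(δ * ε) := neg_le_of_abs_le hb1
    have e2 : φ y - φ x₀ - inner ℝ g (y - x₀) ≤ δ * ε := le_of_abs_le hb2
    rw [hinnery] at e2
    linarith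
  set u : EuclideanSpace ℝ (Fin n) := ε⁻¹ • (x₂ ε - x₀) with hudef
  have hun : ‖u‖ ≤ 1 := by
    rw [hudef, norm_smul, norm_inv, Real.norm_eq_abs, abs_of_pos hε']
    calc ε⁻¹ * ‖x₂ ε - x₀‖ ≤ ε⁻¹ * ε := by
          exact mul_le_mul_of_nonneg_left hxn (inv_pos.mpr hε').le
    _ = 1 := inv_mul_cancel₀ hε'.ne'
  have hinneru : inner ℝ g u ≤ -‖g‖ + 2 * δ := by
    rw [hudef, real_inner_smul_right]
    have := mul_le_mul_of_nonneg_left hkey (inv_pos.mpr hε').le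
    calc ε⁻¹ * inner ℝ g (x₂ ε - x₀) ≤ ε⁻¹ * (-(ε * ‖g‖) + 2 * (δ * ε)) := this
    _ = -‖g‖ + 2 * δ := by field_simp
  have hsq : ‖u + v‖ ^ 2 < η ^ 2 := by
    have : ‖u + v‖ ^ 2 = ‖u‖ ^ 2 + 2 * inner ℝ u v + ‖v‖ ^ 2 := by
      rw [← real_inner_self_eq_norm_sq, real_inner_add_add_self,
        ← real_inner_self_eq_norm_sq, ← real_inner_self_eq_norm_sq]
    have huv : inner ℝ u v ≤ -1 + 2 * δ / ‖g‖ := by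
      rw [hvdef, real_inner_smul_right]
      have := mul_le_mul_of_nonneg_left hinneru (inv_pos.mpr hG).le
      rw [real_inner_comm]
      calc ‖g‖⁻¹ * inner ℝ g u ≤ ‖g‖⁻¹ * (-‖g‖ + 2 * δ) := this
      _ = -1 + 2 * δ / ‖g‖ := by field_simp
    have hu2 : ‖u‖ ^ 2 ≤ 1 := pow_le_one₀ (norm_nonneg u) hun
    have hδval : 2 * δ / ‖g‖ = η ^ 2 / 4 := by
      rw [hδdef]; field_simp; ring
    rw [this, hvnorm]
    nlinarith
  have : ‖u + v‖ < η := lt_of_pow_lt_pow_left₀ 2 hη.le hsq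
  rw [dist_eq_norm]
  calc ‖ε⁻¹ • (x₂ ε - x₀) - -(‖g‖⁻¹ • g)‖ = ‖u + v‖ := by
        rw [hudef, hvdef, sub_neg_eq_add]
  _ < η := this
end

section
/- Let φ be C² near x₀ with ∇φ(x₀) ≠ 0. Suppose there are points x_ε → x₀ with B̄_ε(x_ε) contained in the domain, and a function η(ε) = o(ε²), such that 2φ(x_ε) ≥ max_{B̄_ε(x_ε)} φ + min_{B̄_ε(x_ε)} φ − 2η(ε) for all small ε. Then Δ_∞φ(x₀) := ⟨D²φ(x₀)∇φ(x₀)/|∇φ(x₀)|, ∇φ(x₀)/|∇φ(x₀)|⟩ ≤ 0. -/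
set_option maxHeartbeats 1000000
set_option synthInstance.maxHeartbeats 400000

open RealInnerProductSpace Filter Topology Metric Set

/-- If φ is C² near x₀ with ∇φ(x₀) ≠ 0 and the Dynamic Programming
Principle inequality 2φ(x_ε) ≥ max_{B̄_ε(x_ε)}φ + min_{B̄_ε(x_ε)}φ − 2η(ε) holds
with x_ε → x₀ and η(ε) = o(ε²), then Δ_∞φ(x₀) ≤ 0. -/
theorem dpp_implies_supersolution_nonzero_gradient {n : ℕ}
    (φ : EuclideanSpace ℝ (Fin n) → ℝ) (x₀ : EuclideanSpace ℝ (Fin n))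
    (xe : ℝ → EuclideanSpace ℝ (Fin n)) (η : ℝ → ℝ)
    (hφ : ContDiffAt ℝ 2 φ x₀) (hgrad : gradient φ x₀ ≠ 0)
    (hxe : Tendsto xe (𝓝[>] (0 : ℝ)) (𝓝 x₀))
    (hη : Tendsto (fun ε => η ε / ε ^ 2) (𝓝[>] (0 : ℝ)) (𝓝 0))
    (hDPP : ∀ᶠ ε in 𝓝[>] (0 : ℝ),
      2 * φ (xe ε) ≥ sSup (φ '' closedBall (xe ε) ε)
        + sInf (φ '' closedBall (xe ε) ε) - 2 * η ε) :
    ⟪fderiv ℝ (gradient φ) x₀ (‖gradient φ x₀‖⁻¹ • gradient φ x₀),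
      ‖gradient φ x₀‖⁻¹ • gradient φ x₀⟫ ≤ 0 := by
  set g := gradient φ with hgdef
  set A := fderiv ℝ g x₀ with hAdef
  set G := g x₀ with hGdef
  set v : EuclideanSpace ℝ (Fin n) := ‖G‖⁻¹ • G with hvdef
  set l := 𝓝[>] (0 : ℝ) with hldef
  have hGnorm : 0 < ‖G‖ := norm_pos_iff.2 hgrad
  have hvnorm : ‖v‖ = 1 := norm_smul_inv_norm hgrad
  -- the open set where φ is C²
  obtain ⟨U, hUo, hx₀U, hUc⟩ : ∃ U, IsOpen U ∧ x₀ ∈ U ∧ ContDiffOn ℝ 2 φ U := by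
    have h := hφ.eventually (by simp)
    rcases _root_.mem_nhds_iff.1 h with ⟨U, hsub, hUo, hxU⟩
    exact ⟨U, hUo, hxU, fun y hy => ContDiffAt.contDiffWithinAt (hsub hy)⟩
  have hfense : ∀ w, fderiv ℝ φ w = InnerProductSpace.toDual ℝ _ (g w) := by
    intro w
    rw [hgdef]
    exact ((InnerProductSpace.toDual ℝ _).apply_symm_apply _).symm
  have hgU : ContDiffOn ℝ 1 g U := by
    have h1 : ContDiffOn ℝ 1 (fderiv ℝ φ) U := hUc.fderiv_of_isOpen hUo (by norm_num)
    exact (InnerProductSpace.toDual ℝ _).symm.contDiff.comp_contDiffOn h1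
  have hgdiff : ∀ y ∈ U, DifferentiableAt ℝ g y := fun y hy =>
    ((hgU.differentiableOn one_ne_zero) y hy).differentiableAt (hUo.mem_nhds hy)
  have hφdiff : ∀ y ∈ U, DifferentiableAt ℝ φ y := fun y hy =>
    ((hUc.differentiableOn (by norm_num)) y hy).differentiableAt (hUo.mem_nhds hy)
  have hφcont : ContinuousOn φ U := hUc.continuousOn
  have hfdc : ContinuousAt (fderiv ℝ g) x₀ :=
    (hgU.continuousOn_fderiv_of_isOpen hUo le_rfl).continuousAt (hUo.mem_nhds hx₀U)
  have hgcont : ContinuousAt g x₀ := (hgdiff x₀ hx₀U).continuousAt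
  -- master radius lemma
  have master : ∀ δ : ℝ, 0 < δ → ∃ r : ℝ, 0 < r ∧ ball x₀ r ⊆ U ∧
      (∀ y ∈ ball x₀ r, ‖g y - G‖ ≤ δ) ∧
      (∀ y ∈ ball x₀ r, ‖fderiv ℝ g y - A‖ ≤ δ) := by
    intro δ hδ
    have h1 : ∀ᶠ y in 𝓝 x₀, ‖g y - G‖ ≤ δ := by
      have := hgcont.eventually_mem (Metric.closedBall_mem_nhds G hδ)
      filter_upwards [this] with y hy
      simpa [dist_eq_norm] using hy
    have h2 : ∀ᶠ y in 𝓝 x₀, ‖fderiv ℝ g y - A‖ ≤ δ := by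
      have := hfdc.eventually_mem (Metric.closedBall_mem_nhds A hδ)
      filter_upwards [this] with y hy
      simpa [dist_eq_norm] using hy
    have h3 : ∀ᶠ y in 𝓝 x₀, y ∈ U := hUo.mem_nhds hx₀U
    rcases Metric.mem_nhds_iff.1 ((h1.and (h2.and h3)) : _ ∈ 𝓝 x₀) with ⟨r, hr, hrsub⟩
    exact ⟨r, hr, fun y hy => (hrsub hy).2.2, fun y hy => (hrsub hy).1, fun y hy => (hrsub hy).2.1⟩
  -- first-order mean value estimate
  have claimB : ∀ δ r : ℝ, 0 < δ → ball x₀ r ⊆ U → (∀ y ∈ ball x₀ r, ‖g y - G‖ ≤ δ) →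
      ∀ y ∈ ball x₀ r, ∀ z ∈ ball x₀ r, |φ y - φ z - ⟪G, y - z⟫| ≤ δ * ‖y - z‖ := by
    intro δ r hδ hsub hgb y hy z hz
    have key := Convex.norm_image_sub_le_of_norm_hasFDerivWithin_le
      (f := fun p => φ p - ⟪G, p⟫)
      (f' := fun p => fderiv ℝ φ p - InnerProductSpace.toDual ℝ _ G)
      (fun p hp => by
        have h1 : HasFDerivAt φ (fderiv ℝ φ p) p := (hφdiff p (hsub hp)).hasFDerivAt
        have h2 : HasFDerivAt (fun q : EuclideanSpace ℝ (Fin n) => ⟪G, q⟫)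
            (InnerProductSpace.toDual ℝ _ G) p :=
          (InnerProductSpace.toDual ℝ (EuclideanSpace ℝ (Fin n)) G).hasFDerivAt
        exact (h1.sub h2).hasFDerivWithinAt)
      (fun p hp => by
        show ‖fderiv ℝ φ p - InnerProductSpace.toDual ℝ _ G‖ ≤ δ
        rw [hfense p, ← map_sub, LinearIsometryEquiv.norm_map]
        exact hgb p hp)
      (convex_ball x₀ r) hz hy
    have heq : φ y - ⟪G, y⟫ - (φ z - ⟪G, z⟫) = φ y - φ z - ⟪G, y - z⟫ := by
      rw [inner_sub_right]; ring
    rw [heq, Real.norm_eq_abs] at key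
    exact key
  -- second-order estimate
  have claimC : ∀ δ r : ℝ, 0 < δ → ball x₀ r ⊆ U →
      (∀ y ∈ ball x₀ r, ‖fderiv ℝ g y - A‖ ≤ δ) →
      ∀ x h : EuclideanSpace ℝ (Fin n), ‖x - x₀‖ + ‖h‖ < r →
      |φ (x + h) + φ (x - h) - 2 * φ x - ⟪A h, h⟫| ≤ 2 * δ * ‖h‖ ^ 2 := by
    intro δ r hδ hsub hfb x h hxr
    have hmem : ∀ t : ℝ, t ∈ Icc (0:ℝ) 1 → x + t • h ∈ ball x₀ r ∧ x - t • h ∈ ball x₀ r := by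
      intro t ht
      have hnorm : ‖t • h‖ ≤ ‖h‖ := by
        rw [norm_smul, Real.norm_eq_abs, abs_of_nonneg ht.1]
        nlinarith [ht.2, norm_nonneg h]
      constructor
      · rw [mem_ball, dist_eq_norm]
        have : x + t • h - x₀ = (x - x₀) + t • h := by abel
        rw [this]
        calc ‖(x - x₀) + t • h‖ ≤ ‖x - x₀‖ + ‖t • h‖ := norm_add_le _ _
          _ < r := by linarith
      · rw [mem_ball, dist_eq_norm]
        have : x - t • h - x₀ = (x - x₀) - t • h := by abel
        rw [this]
        calc ‖(x - x₀) - t • h‖ ≤ ‖x - x₀‖ + ‖t • h‖ := norm_sub_le _ _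
          _ < r := by linarith
    have claimA : ∀ y ∈ ball x₀ r, ∀ z ∈ ball x₀ r, ‖g y - g z - A (y - z)‖ ≤ δ * ‖y - z‖ := by
      intro y hy z hz
      have key := Convex.norm_image_sub_le_of_norm_hasFDerivWithin_le
        (f := fun p => g p - A p) (f' := fun p => fderiv ℝ g p - A)
        (fun p hp => ((hgdiff p (hsub hp)).hasFDerivAt.sub A.hasFDerivAt).hasFDerivWithinAt)
        (fun p hp => hfb p hp) (convex_ball x₀ r) hz hy
      have heq : g y - A y - (g z - A z) = g y - g z - A (y - z) := by
        rw [map_sub]; abel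
      rwa [heq] at key
    set K := ⟪A h, h⟫ with hK
    set F : ℝ → ℝ := fun t => φ (x + t • h) + φ (x - t • h) - t ^ 2 * K with hF
    set F' : ℝ → ℝ := fun t =>
      ⟪g (x + t • h), h⟫ - ⟪g (x - t • h), h⟫ - 2 * t * K with hF'
    have hder : ∀ t ∈ Icc (0:ℝ) 1, HasDerivWithinAt F (F' t) (Icc (0:ℝ) 1) t := by
      intro t ht
      obtain ⟨hp, hm⟩ := hmem t ht
      have hc1 : HasDerivAt (fun s : ℝ => x + s • h) h t := by
        simpa using ((hasDerivAt_id t).smul_const h).const_add x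
      have hc2 : HasDerivAt (fun s : ℝ => x - s • h) (-h) t := by
        simpa using ((hasDerivAt_id t).smul_const h).const_sub x
      have hd1 : HasDerivAt (fun s : ℝ => φ (x + s • h)) (fderiv ℝ φ (x + t • h) h) t :=
        (hφdiff _ (hsub hp)).hasFDerivAt.comp_hasDerivAt t hc1
      have hd2 : HasDerivAt (fun s : ℝ => φ (x - s • h)) (fderiv ℝ φ (x - t • h) (-h)) t :=
        (hφdiff _ (hsub hm)).hasFDerivAt.comp_hasDerivAt t hc2
      have hd3 : HasDerivAt (fun s : ℝ => s ^ 2 * K) (2 * t * K) t := by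
        simpa using (hasDerivAt_pow 2 t).mul_const K
      have hsum := (hd1.add hd2).sub hd3
      have heq : fderiv ℝ φ (x + t • h) h + fderiv ℝ φ (x - t • h) (-h) - 2 * t * K
          = F' t := by
        rw [hfense, hfense, hF']
        simp only [InnerProductSpace.toDual_apply_apply, inner_neg_right]
        ring
      rw [heq] at hsum
      exact hsum.hasDerivWithinAt
    have hbound : ∀ t ∈ Ico (0:ℝ) 1, ‖F' t‖ ≤ 2 * δ * ‖h‖ ^ 2 := by
      intro t ht
      obtain ⟨hp, hm⟩ := hmem t ⟨ht.1, ht.2.le⟩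
      have hsubpt : (x + t • h) - (x - t • h) = (2 * t) • h := by
        rw [two_mul, add_smul]; abel
      have hA := claimA _ hp _ hm
      rw [hsubpt] at hA
      have hFt : F' t = ⟪g (x + t • h) - g (x - t • h) - A ((2 * t) • h), h⟫ := by
        rw [hF', map_smul, inner_sub_left, inner_sub_left, real_inner_smul_left, hK]
        all_goals ring
      rw [hFt, Real.norm_eq_abs]
      calc |⟪g (x + t • h) - g (x - t • h) - A ((2 * t) • h), h⟫|
          ≤ ‖g (x + t • h) - g (x - t • h) - A ((2 * t) • h)‖ * ‖h‖ :=
            abs_real_inner_le_norm _ _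
        _ ≤ (δ * ‖(2 * t) • h‖) * ‖h‖ := mul_le_mul_of_nonneg_right hA (norm_nonneg h)
        _ ≤ 2 * δ * ‖h‖ ^ 2 := by
            rw [norm_smul, Real.norm_eq_abs,
              abs_of_nonneg (by linarith [ht.1] : (0:ℝ) ≤ 2 * t)]
            have hp1 : (0:ℝ) ≤ δ * ‖h‖ ^ 2 := by positivity
            have h2t : 2 * t ≤ 2 := by linarith [ht.2]
            nlinarith [mul_le_mul_of_nonneg_right h2t hp1]
    have hmvt := norm_image_sub_le_of_norm_deriv_le_segment_01' hder hbound
    have h10 : F 1 - F 0 = φ (x + h) + φ (x - h) - 2 * φ x - K := by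
      simp only [hF, one_smul, zero_smul, add_zero, sub_zero, one_pow]
      ring
    rw [h10, Real.norm_eq_abs] at hmvt
    exact hmvt
  -- eventual inclusion of the balls
  have hEV : ∀ r : ℝ, 0 < r → ∀ᶠ ε in l, 0 < ε ∧ ε < r / 2 ∧ ‖xe ε - x₀‖ < r / 2 ∧
      closedBall (xe ε) ε ⊆ ball x₀ r := by
    intro r hr
    have h1 : ∀ᶠ ε in l, 0 < ε := eventually_mem_nhdsWithin
    have h2 : ∀ᶠ ε in l, ε < r / 2 := eventually_nhdsWithin_of_eventually_nhds
      (eventually_lt_nhds (by linarith))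
    have h3 : ∀ᶠ ε in l, ‖xe ε - x₀‖ < r / 2 := by
      have := hxe.eventually (Metric.ball_mem_nhds x₀ (by linarith : (0:ℝ) < r / 2))
      filter_upwards [this] with ε hε
      simpa [dist_eq_norm] using hε
    filter_upwards [h1, h2, h3] with ε he1 he2 he3
    refine ⟨he1, he2, he3, fun z hz => ?_⟩
    rw [mem_closedBall] at hz
    rw [mem_ball]
    have htr : dist z x₀ ≤ dist z (xe ε) + dist (xe ε) x₀ := dist_triangle _ _ _
    have : dist (xe ε) x₀ = ‖xe ε - x₀‖ := dist_eq_norm _ _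
    linarith
  -- minimizer selection
  classical
  set Y : ℝ → EuclideanSpace ℝ (Fin n) := fun ε =>
    if hc : ∃ y, y ∈ closedBall (xe ε) ε ∧ ∀ z ∈ closedBall (xe ε) ε, φ y ≤ φ z
    then hc.choose else xe ε with hYdef
  have hYspec : ∀ ε, (∃ y, y ∈ closedBall (xe ε) ε ∧ ∀ z ∈ closedBall (xe ε) ε, φ y ≤ φ z) →
      Y ε ∈ closedBall (xe ε) ε ∧ ∀ z ∈ closedBall (xe ε) ε, φ (Y ε) ≤ φ z := by
    intro ε hc
    rw [hYdef]
    simp only [dif_pos hc]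
    exact hc.choose_spec
  -- existence of minimizers eventually
  obtain ⟨r₀, hr₀, hr₀U, -, -⟩ := master 1 one_pos
  have hex : ∀ᶠ ε in l, Y ε ∈ closedBall (xe ε) ε ∧ ∀ z ∈ closedBall (xe ε) ε, φ (Y ε) ≤ φ z := by
    filter_upwards [hEV r₀ hr₀] with ε ⟨he1, he2, he3, hsub⟩
    refine hYspec ε ?_
    obtain ⟨y, hy, hymin⟩ := (isCompact_closedBall (xe ε) ε).exists_isMinOn
      ⟨xe ε, mem_closedBall_self he1.le⟩ (hφcont.mono (hsub.trans hr₀U))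
    exact ⟨y, hy, fun z hz => hymin hz⟩
  set w : ℝ → EuclideanSpace ℝ (Fin n) := fun ε => ε⁻¹ • (Y ε - xe ε) with hwdef
  have hweq : ∀ ε : ℝ, 0 < ε → ε • w ε = Y ε - xe ε := fun ε hε => smul_inv_smul₀ hε.ne' _
  have hwnorm : ∀ ε : ℝ, 0 < ε → Y ε ∈ closedBall (xe ε) ε → ‖w ε‖ ≤ 1 := by
    intro ε hε hY
    rw [mem_closedBall, dist_eq_norm] at hY
    rw [hwdef]
    simp only [norm_smul, norm_inv, Real.norm_eq_abs, abs_of_pos hε]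
    calc ε⁻¹ * ‖Y ε - xe ε‖ ≤ ε⁻¹ * ε := by
          exact mul_le_mul_of_nonneg_left hY (inv_nonneg.2 hε.le)
      _ = 1 := inv_mul_cancel₀ hε.ne'
  -- w tends to -v
  have hwlim : Tendsto w l (𝓝 (-v)) := by
    rw [Metric.tendsto_nhds]
    intro δ'' hδ''
    set δ : ℝ := ‖G‖ * δ'' ^ 2 / 8 with hδdef
    have hδpos : 0 < δ := by positivity
    obtain ⟨r, hr, hrU, hgb, -⟩ := master δ hδpos
    filter_upwards [hEV r hr, hex] with ε ⟨he1, he2, he3, hsub⟩ ⟨hYmem, hYmin⟩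
    -- points
    have hxε : xe ε ∈ ball x₀ r := hsub (mem_closedBall_self he1.le)
    have hYb : Y ε ∈ ball x₀ r := hsub hYmem
    have hvmem : xe ε - ε • v ∈ closedBall (xe ε) ε := by
      rw [mem_closedBall, dist_eq_norm]
      simp [norm_smul, abs_of_pos he1, hvnorm, he1.le]
    have hvb : xe ε - ε • v ∈ ball x₀ r := hsub hvmem
    have h1 := claimB δ r hδpos hrU hgb (Y ε) hYb (xe ε) hxε
    have h2 := claimB δ r hδpos hrU hgb (xe ε - ε • v) hvb (xe ε) hxε
    have hmin := hYmin _ hvmem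
    have hYx : ‖Y ε - xe ε‖ ≤ ε := by
      rw [mem_closedBall, dist_eq_norm] at hYmem; exact hYmem
    -- inner products
    have hGv : ⟪G, v⟫ = ‖G‖ := by
      rw [hvdef, real_inner_smul_right, real_inner_self_eq_norm_sq]
      field_simp
    have hiv : ⟪G, xe ε - ε • v - xe ε⟫ = -(ε * ‖G‖) := by
      rw [show xe ε - ε • v - xe ε = -(ε • v) by abel, inner_neg_right,
        real_inner_smul_right, hGv]
    have hiw : ⟪G, Y ε - xe ε⟫ = ε * ⟪G, w ε⟫ := by
      rw [← hweq ε he1, real_inner_smul_right]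
    -- derive the inner product bound
    have habs1 := abs_le.1 h1
    have habs2 := abs_le.1 h2
    have hnv : ‖xe ε - ε • v - xe ε‖ = ε := by
      rw [show xe ε - ε • v - xe ε = -(ε • v) by abel]
      simp [norm_smul, abs_of_pos he1, hvnorm]
    have hGw : ⟪G, w ε⟫ ≤ -‖G‖ + 2 * δ := by
      have key1 : -(δ * ε) ≤ φ (Y ε) - φ (xe ε) - ε * ⟪G, w ε⟫ := by
        have h1l := habs1.1
        rw [hiw] at h1l
        have e3 : δ * ‖Y ε - xe ε‖ ≤ δ * ε := mul_le_mul_of_nonneg_left hYx hδpos.le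
        linarith
      have key2 : φ (xe ε - ε • v) - φ (xe ε) ≤ -(ε * ‖G‖) + δ * ε := by
        have h2r := habs2.2
        rw [hiv, hnv] at h2r
        linarith
      have hmul : ε * ⟪G, w ε⟫ ≤ ε * (-‖G‖ + 2 * δ) := by nlinarith [hmin]
      exact le_of_mul_le_mul_left hmul he1
    have hvw : ⟪v, w ε⟫ ≤ -1 + 2 * δ / ‖G‖ := by
      rw [hvdef, real_inner_smul_left]
      rw [show (-1 : ℝ) + 2 * δ / ‖G‖ = ‖G‖⁻¹ * (-‖G‖ + 2 * δ) by field_simp]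
      exact mul_le_mul_of_nonneg_left hGw (inv_nonneg.2 hGnorm.le)
    have hwn := hwnorm ε he1 hYmem
    have hnormsq : ‖w ε + v‖ ^ 2 ≤ 4 * δ / ‖G‖ := by
      have expand := norm_add_sq_real (w ε) v
      have hsq : ‖w ε‖ ^ 2 ≤ 1 := by nlinarith [norm_nonneg (w ε)]
      have hcomm : ⟪w ε, v⟫ = ⟪v, w ε⟫ := real_inner_comm _ _
      rw [expand, hvnorm, hcomm]
      have h4 : 2 * (2 * δ / ‖G‖) = 4 * δ / ‖G‖ := by ring
      have h5 : (1 : ℝ) ^ 2 = 1 := one_pow 2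
      linarith
    have hdd : 4 * δ / ‖G‖ = δ'' ^ 2 / 2 := by
      rw [hδdef]; field_simp; ring
    rw [dist_eq_norm, sub_neg_eq_add]
    nlinarith [norm_nonneg (w ε + v), hδ'']
  -- the limit of the quadratic form along w
  have hAlim : Tendsto (fun ε => ⟪A (w ε), w ε⟫) l (𝓝 ⟪A v, v⟫) := by
    have hc : Continuous fun p : EuclideanSpace ℝ (Fin n) => ⟪A p, p⟫ :=
      (A.continuous).inner continuous_id
    have := hc.continuousAt.tendsto.comp hwlim
    have hval : ⟪A (-v), -v⟫ = ⟪A v, v⟫ := by rw [map_neg, inner_neg_neg]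
    rw [hval] at this
    exact this
  -- final: for every δ > 0, ⟪A v, v⟫ ≤ 2δ
  have hfin : ∀ δ : ℝ, 0 < δ → ⟪A v, v⟫ ≤ 2 * δ := by
    intro δ hδ
    obtain ⟨r, hr, hrU, -, hfb⟩ := master δ hδ
    have hev : ∀ᶠ ε in l, ⟪A (w ε), w ε⟫ ≤ 2 * (η ε / ε ^ 2) + 2 * δ := by
      filter_upwards [hEV r hr, hex, hDPP] with ε ⟨he1, he2, he3, hsub⟩ ⟨hYmem, hYmin⟩ hdpp
      have hh : ‖Y ε - xe ε‖ ≤ ε := by rwa [mem_closedBall, dist_eq_norm] at hYmem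
      have hcond : ‖xe ε - x₀‖ + ‖Y ε - xe ε‖ < r := by linarith
      have hC := claimC δ r hδ hrU hfb (xe ε) (Y ε - xe ε) hcond
      have hplus : xe ε + (Y ε - xe ε) = Y ε := by abel
      rw [hplus] at hC
      -- the antipodal point is in the closed ball
      have hanti : xe ε - (Y ε - xe ε) ∈ closedBall (xe ε) ε := by
        rw [mem_closedBall, dist_eq_norm]
        rw [show xe ε - (Y ε - xe ε) - xe ε = -(Y ε - xe ε) by abel, norm_neg]
        exact hh
      have hcont' : ContinuousOn φ (closedBall (xe ε) ε) := hφcont.mono (hsub.trans hrU)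
      have hbdd : BddAbove (φ '' closedBall (xe ε) ε) :=
        (isCompact_closedBall (xe ε) ε).bddAbove_image hcont'
      have hne : (φ '' closedBall (xe ε) ε).Nonempty :=
        ⟨φ (xe ε), mem_image_of_mem φ (mem_closedBall_self he1.le)⟩
      have hsup : φ (xe ε - (Y ε - xe ε)) ≤ sSup (φ '' closedBall (xe ε) ε) :=
        le_csSup hbdd (mem_image_of_mem φ hanti)
      have hinf : φ (Y ε) ≤ sInf (φ '' closedBall (xe ε) ε) :=
        le_csInf hne (by rintro b ⟨z, hz, rfl⟩; exact hYmin z hz)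
      -- combine DPP
      have hkey : φ (Y ε) + φ (xe ε - (Y ε - xe ε)) - 2 * φ (xe ε) ≤ 2 * η ε := by
        have := hdpp
        linarith
      have hquad : ⟪A (Y ε - xe ε), Y ε - xe ε⟫ ≤ 2 * η ε + 2 * δ * ε ^ 2 := by
        have habs := (abs_le.1 hC).1
        have hsqle : ‖Y ε - xe ε‖ ^ 2 ≤ ε ^ 2 := by
          have := norm_nonneg (Y ε - xe ε)
          nlinarith
        nlinarith
      -- rescale
      have hresc : ⟪A (Y ε - xe ε), Y ε - xe ε⟫ = ε ^ 2 * ⟪A (w ε), w ε⟫ := by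
        rw [← hweq ε he1, map_smul, real_inner_smul_left, real_inner_smul_right]
        ring
      rw [hresc] at hquad
      have hε2 : (0 : ℝ) < ε ^ 2 := by positivity
      rw [show 2 * (η ε / ε ^ 2) + 2 * δ = (2 * η ε + 2 * δ * ε ^ 2) / ε ^ 2 by
        field_simp]
      rw [le_div_iff₀ hε2]
      linarith [hquad]
    have hrhs : Tendsto (fun ε => 2 * (η ε / ε ^ 2) + 2 * δ) l (𝓝 (2 * 0 + 2 * δ)) :=
      ((hη.const_mul 2).add_const (2 * δ))
    rw [mul_zero, zero_add] at hrhs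
    exact le_of_tendsto_of_tendsto hAlim hrhs hev
  by_contra hcon
  push_neg at hcon
  have := hfin (⟪A v, v⟫ / 4) (by linarith)
  linarith
end

section
/- Let φ be C² near x₀ ∈ ℝⁿ, ∇φ(x₀) ≠ 0, and suppose x_ε → x₀, points y_ε ∈ B̄_ε(x_ε) satisfy (y_ε − x_ε)/ε → −∇φ(x₀)/|∇φ(x₀)|, and with ỹ_ε = 2x_ε − y_ε one has φ(y_ε) + φ(ỹ_ε) − 2φ(x_ε) ≤ η(ε) with η(ε) = o(ε²). Then ⟨D²φ(x₀) ∇φ(x₀)/|∇φ(x₀)|, ∇φ(x₀)/|∇φ(x₀)|⟩ ≤ 0. -/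
open RealInnerProductSpace Filter Topology Metric

set_option maxHeartbeats 1000000

/-- The second-order reflection argument: if φ is C² near x₀ with
∇φ(x₀) ≠ 0, x_ε → x₀, y_ε ∈ B̄_ε(x_ε) with (y_ε − x_ε)/ε → −∇φ(x₀)/|∇φ(x₀)|,
and φ(y_ε) + φ(2x_ε − y_ε) − 2φ(x_ε) ≤ η(ε) with η(ε) = o(ε²), then
⟨D²φ(x₀)∇φ(x₀)/|∇φ(x₀)|, ∇φ(x₀)/|∇φ(x₀)|⟩ ≤ 0. -/
theorem reflection_argument_supersolution {n : ℕ}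
    (φ : EuclideanSpace ℝ (Fin n) → ℝ) (x₀ : EuclideanSpace ℝ (Fin n))
    (xe ye : ℝ → EuclideanSpace ℝ (Fin n)) (η : ℝ → ℝ)
    (hφ : ContDiffAt ℝ 2 φ x₀) (hgrad : gradient φ x₀ ≠ 0)
    (hxe : Tendsto xe (𝓝[>] (0 : ℝ)) (𝓝 x₀))
    (hye : ∀ᶠ ε in 𝓝[>] (0 : ℝ), ye ε ∈ closedBall (xe ε) ε)
    (hdir : Tendsto (fun ε : ℝ => ε⁻¹ • (ye ε - xe ε)) (𝓝[>] (0 : ℝ))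
      (𝓝 (-(‖gradient φ x₀‖⁻¹ • gradient φ x₀))))
    (hη : Tendsto (fun ε => η ε / ε ^ 2) (𝓝[>] (0 : ℝ)) (𝓝 0))
    (hineq : ∀ᶠ ε in 𝓝[>] (0 : ℝ),
      φ (ye ε) + φ ((2 : ℝ) • xe ε - ye ε) - 2 * φ (xe ε) ≤ η ε) :
    ⟪fderiv ℝ (gradient φ) x₀ (‖gradient φ x₀‖⁻¹ • gradient φ x₀),
      ‖gradient φ x₀‖⁻¹ • gradient φ x₀⟫ ≤ 0 := by
  set A := fderiv ℝ (gradient φ) x₀ with hA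
  set v := ‖gradient φ x₀‖⁻¹ • gradient φ x₀ with hv
  -- g := gradient φ is C¹ at x₀
  have hφ' : ContDiffAt ℝ 1 (fderiv ℝ φ) x₀ := hφ.fderiv_right (by norm_num : (1 : WithTop ℕ∞) + 1 ≤ 2)
  have hg1 : ContDiffAt ℝ 1 (gradient φ) x₀ := by
    have hc : ContDiff ℝ 1 ((InnerProductSpace.toDual ℝ (EuclideanSpace ℝ (Fin n))).symm : (EuclideanSpace ℝ (Fin n) →L[ℝ] ℝ) → EuclideanSpace ℝ (Fin n)) :=
      (InnerProductSpace.toDual ℝ (EuclideanSpace ℝ (Fin n))).symm.contDiff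
    exact hc.comp_contDiffAt x₀ hφ'
  have hH : ContinuousAt (fun z => fderiv ℝ (gradient φ) z) x₀ := by
    have h0 : ContDiffAt ℝ 0 (fderiv ℝ (gradient φ)) x₀ := hg1.fderiv_right (by norm_num : (0 : WithTop ℕ∞) + 1 ≤ 1)
    obtain ⟨u, hu, hcu⟩ := contDiffAt_zero.mp h0
    exact hcu.continuousAt hu
  obtain ⟨u, hu, hcu⟩ := hg1.contDiffOn (le_refl _) (by simp)
  obtain ⟨u2, hu2, hcu2⟩ := hφ.contDiffOn (le_refl _) (by simp)
  obtain ⟨r₀, hr₀, hball⟩ := Metric.mem_nhds_iff.mp (Filter.inter_mem hu hu2)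
  have hgd : ∀ z ∈ ball x₀ r₀, HasFDerivAt (gradient φ) (fderiv ℝ (gradient φ) z) z := by
    intro z hz
    have : DifferentiableOn ℝ (gradient φ) (ball x₀ r₀) :=
      ((hcu.mono (fun w hw => (hball hw).1)).differentiableOn one_ne_zero)
    exact (this.differentiableAt (isOpen_ball.mem_nhds hz)).hasFDerivAt
  have hφd : ∀ z ∈ ball x₀ r₀, HasFDerivAt φ (InnerProductSpace.toDual ℝ (EuclideanSpace ℝ (Fin n)) (gradient φ z)) z := by
    intro z hz
    have : DifferentiableOn ℝ φ (ball x₀ r₀) :=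
      ((hcu2.mono (fun w hw => (hball hw).2)).differentiableOn (by norm_num))
    exact (this.differentiableAt (isOpen_ball.mem_nhds hz)).hasGradientAt.hasFDerivAt
  refine le_of_forall_pos_le_add fun δ hδ => ?_
  set δ' := δ / 3 with hδ'
  have hδ'pos : 0 < δ' := by positivity
  -- choose radius where Hessian is δ'-close to A
  have hev : ∀ᶠ z in 𝓝 x₀, ‖fderiv ℝ (gradient φ) z - A‖ ≤ δ' := by
    have hmem : ∀ᶠ w in 𝓝 A, ‖w - A‖ ≤ δ' :=
      eventually_of_mem (closedBall_mem_nhds A hδ'pos)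
        (fun w hw => by rwa [mem_closedBall, dist_eq_norm] at hw)
    exact hH.eventually hmem
  obtain ⟨r1, hr1pos, hr1⟩ := Metric.eventually_nhds_iff_ball.mp hev
  set r := min r₀ r1 with hrdef
  have hrpos : 0 < r := lt_min hr₀ hr1pos
  have hsub0 : ball x₀ r ⊆ ball x₀ r₀ := ball_subset_ball (min_le_left _ _)
  have hsub1 : ball x₀ r ⊆ ball x₀ r1 := ball_subset_ball (min_le_right _ _)
  have ev1 : ∀ᶠ ε in 𝓝[>] (0 : ℝ), xe ε ∈ ball x₀ (r / 2) :=
    hxe (ball_mem_nhds _ (by positivity))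
  have ev2 : ∀ᶠ ε in 𝓝[>] (0 : ℝ), ε ∈ Set.Ioo (0 : ℝ) (r / 4) :=
    Ioo_mem_nhdsGT_of_mem ⟨le_refl 0, by positivity⟩
  have key : ∀ᶠ ε in 𝓝[>] (0 : ℝ),
      ⟪A (ε⁻¹ • (ye ε - xe ε)), ε⁻¹ • (ye ε - xe ε)⟫ ≤ η ε / ε ^ 2 + 2 * δ' := by
    filter_upwards [hye, hineq, ev1, ev2] with ε hyeε hineqε hx hε
    obtain ⟨hεpos, hεlt⟩ := hε
    set x := xe ε
    set y := ye ε
    set h := y - x with hhdef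
    set c := (⟪A h, h⟫ : ℝ) with hcdef
    have hhn : ‖h‖ ≤ ε := by rwa [mem_closedBall, dist_eq_norm] at hyeε
    have hxx : ‖x - x₀‖ < r / 2 := by rwa [mem_ball, dist_eq_norm] at hx
    have hmem : ∀ s : ℝ, |s| ≤ 1 → x + s • h ∈ ball x₀ r := by
      intro s hs
      have e1 : x + s • h - x₀ = (x - x₀) + s • h := by abel
      have e2 : ‖x + s • h - x₀‖ ≤ ‖x - x₀‖ + ‖s • h‖ := by
        rw [e1]; exact norm_add_le _ _
      have e3 : ‖s • h‖ ≤ ε := by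
        rw [norm_smul, Real.norm_eq_abs]
        nlinarith [norm_nonneg h]
      rw [mem_ball, dist_eq_norm]
      linarith
    set F : EuclideanSpace ℝ (Fin n) → EuclideanSpace ℝ (Fin n) := fun z => gradient φ z - A z with hFdef
    have hF : ∀ z ∈ ball x₀ r, HasFDerivWithinAt F (fderiv ℝ (gradient φ) z - A) (ball x₀ r) z :=
      fun z hz => ((hgd z (hsub0 hz)).sub A.hasFDerivAt).hasFDerivWithinAt
    have hFb : ∀ z ∈ ball x₀ r, ‖fderiv ℝ (gradient φ) z - A‖ ≤ δ' :=
      fun z hz => hr1 z (hsub1 hz)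
    have hFmvt : ∀ a ∈ ball x₀ r, ∀ b ∈ ball x₀ r, ‖F a - F b‖ ≤ δ' * ‖a - b‖ :=
      fun a ha b hb =>
        (convex_ball x₀ r).norm_image_sub_le_of_norm_hasFDerivWithin_le hF hFb hb ha
    set ψ : ℝ → ℝ := fun t => φ (x + t • h) + φ (x - t • h) - 2 * φ x - t ^ 2 * c with hψdef
    have hmem1 : ∀ t ∈ Set.Icc (0:ℝ) 1, x + t • h ∈ ball x₀ r := by
      intro t ht
      exact hmem t (by rw [abs_of_nonneg ht.1]; exact ht.2)
    have hmem2 : ∀ t ∈ Set.Icc (0:ℝ) 1, x - t • h ∈ ball x₀ r := by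
      intro t ht
      have := hmem (-t) (by rw [abs_neg, abs_of_nonneg ht.1]; exact ht.2)
      simpa [neg_smul, sub_eq_add_neg] using this
    have hψd : ∀ t ∈ Set.Icc (0:ℝ) 1,
        HasDerivAt ψ (⟪F (x + t • h) - F (x - t • h), h⟫) t := by
      intro t ht
      have l1 : HasDerivAt (fun t : ℝ => x + t • h) h t := by
        simpa using ((hasDerivAt_id t).smul_const h).const_add x
      have l2 : HasDerivAt (fun t : ℝ => x - t • h) (-h) t := by
        simpa using ((hasDerivAt_id t).smul_const h).const_sub x
      have d1 : HasDerivAt (fun t : ℝ => φ (x + t • h)) ⟪gradient φ (x + t • h), h⟫ t := by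
        have := (hφd _ (hsub0 (hmem1 t ht))).comp_hasDerivAt t l1
        rw [InnerProductSpace.toDual_apply_apply] at this
        exact this
      have d2 : HasDerivAt (fun t : ℝ => φ (x - t • h)) (-⟪gradient φ (x - t • h), h⟫) t := by
        have := (hφd _ (hsub0 (hmem2 t ht))).comp_hasDerivAt t l2
        rw [InnerProductSpace.toDual_apply_apply, inner_neg_right] at this
        exact this
      have d3 : HasDerivAt (fun t : ℝ => t ^ 2 * c) (2 * t * c) t := by
        simpa using (hasDerivAt_pow 2 t).mul_const c
      have dtot := ((d1.add d2).sub_const (2 * φ x)).sub d3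
      convert dtot using 1
      · rfl
      · rfl
      · rfl
      have hab : (x + t • h) - (x - t • h) = (2 * t) • h := by module
      have : F (x + t • h) - F (x - t • h)
          = gradient φ (x + t • h) - gradient φ (x - t • h) - A ((2 * t) • h) := by
        simp only [hFdef, ← hab, map_sub]
        abel
      rw [this]
      simp only [inner_sub_left, map_smul, real_inner_smul_left, hcdef]
      ring
    have hψb : ∀ t ∈ Set.Icc (0:ℝ) 1,
        ‖(⟪F (x + t • h) - F (x - t • h), h⟫ : ℝ)‖ ≤ 2 * δ' * ε ^ 2 := by
      intro t ht
      have h1 := hFmvt _ (hmem1 t ht) _ (hmem2 t ht)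
      have hab : (x + t • h) - (x - t • h) = (2 * t) • h := by module
      rw [hab] at h1
      have h2 : ‖(2 * t) • h‖ = 2 * t * ‖h‖ := by
        rw [norm_smul, Real.norm_eq_abs, abs_of_nonneg (by linarith [ht.1])]
      rw [h2] at h1
      have h3 : ‖(⟪F (x + t • h) - F (x - t • h), h⟫ : ℝ)‖
          ≤ ‖F (x + t • h) - F (x - t • h)‖ * ‖h‖ := by
        rw [Real.norm_eq_abs]; exact abs_real_inner_le_norm _ _
      have hn : (0:ℝ) ≤ ‖h‖ := norm_nonneg h
      calc ‖(⟪F (x + t • h) - F (x - t • h), h⟫ : ℝ)‖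
          ≤ ‖F (x + t • h) - F (x - t • h)‖ * ‖h‖ := h3
        _ ≤ (δ' * (2 * t * ‖h‖)) * ‖h‖ := mul_le_mul_of_nonneg_right h1 hn
        _ = 2 * δ' * (t * ‖h‖ ^ 2) := by ring
        _ ≤ 2 * δ' * ε ^ 2 := by
            have hh2 : ‖h‖ ^ 2 ≤ ε ^ 2 := by nlinarith
            have ht2 : t * ‖h‖ ^ 2 ≤ ε ^ 2 :=
              le_trans (mul_le_of_le_one_left (sq_nonneg _) ht.2) hh2
            nlinarith [hδ'pos.le, ht2]
    have hmvt := (convex_Icc (0:ℝ) 1).norm_image_sub_le_of_norm_hasDerivWithin_le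
      (fun t ht => (hψd t ht).hasDerivWithinAt) hψb
      (Set.left_mem_Icc.mpr zero_le_one) (Set.right_mem_Icc.mpr zero_le_one)
    have hψ0 : ψ 0 = 0 := by simp [hψdef]; ring
    have hψ1 : ψ 1 = φ y + φ ((2:ℝ) • x - y) - 2 * φ x - c := by
      have e1 : x + h = y := by rw [hhdef]; abel
      have e2 : x - h = (2:ℝ) • x - y := by rw [hhdef]; module
      simp only [hψdef, one_smul, one_pow, one_mul]
      rw [e1, e2]
    rw [hψ0, sub_zero, Real.norm_eq_abs] at hmvt
    have hmvt' : |ψ 1| ≤ 2 * δ' * ε ^ 2 := by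
      have : ‖(1:ℝ) - 0‖ = 1 := by norm_num
      rw [this, mul_one] at hmvt
      exact hmvt
    have hclow : -(2 * δ' * ε ^ 2) ≤ ψ 1 := (abs_le.mp hmvt').1
    have hcle : c ≤ η ε + 2 * δ' * ε ^ 2 := by
      rw [hψ1] at hclow
      linarith [hineqε]
    -- conclude
    have hε2 : (0:ℝ) < ε ^ 2 := by positivity
    have hQ : (⟪A (ε⁻¹ • h), ε⁻¹ • h⟫ : ℝ) = c / ε ^ 2 := by
      rw [map_smul, real_inner_smul_left, real_inner_smul_right, ← hcdef,
        div_eq_mul_inv, pow_two, mul_inv]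
      ring
    rw [hQ]
    have hdiv : c / ε ^ 2 ≤ (η ε + 2 * δ' * ε ^ 2) / ε ^ 2 :=
      (div_le_div_iff_of_pos_right hε2).mpr hcle
    have heq : (η ε + 2 * δ' * ε ^ 2) / ε ^ 2 = η ε / ε ^ 2 + 2 * δ' := by
      field_simp
    linarith
  have hlim : Tendsto (fun ε : ℝ => (⟪A (ε⁻¹ • (ye ε - xe ε)), ε⁻¹ • (ye ε - xe ε)⟫ : ℝ))
      (𝓝[>] (0:ℝ)) (𝓝 ⟪A v, v⟫) := by
    have hc : Continuous fun z : EuclideanSpace ℝ (Fin n) => (⟪A z, z⟫ : ℝ) := A.continuous.inner continuous_id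
    have h2 := (hc.tendsto (-v)).comp hdir
    have h3 : (⟪A (-v), -v⟫ : ℝ) = ⟪A v, v⟫ := by rw [map_neg, inner_neg_neg]
    rw [h3] at h2
    exact h2
  have hη' : ∀ᶠ ε in 𝓝[>] (0:ℝ), η ε / ε ^ 2 < δ' := hη.eventually_lt_const hδ'pos
  have hfin : ∀ᶠ ε in 𝓝[>] (0:ℝ),
      (⟪A (ε⁻¹ • (ye ε - xe ε)), ε⁻¹ • (ye ε - xe ε)⟫ : ℝ) ≤ 0 + δ := by
    filter_upwards [key, hη'] with ε h1 h2
    have : δ' = δ / 3 := hδ'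
    linarith
  exact le_of_tendsto hlim hfin
end
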